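/- Let A, B ⊆ Y with ∅ ≠ Cl₊A ≠ Y and ∅ ≠ Cl₊B ≠ Y, and suppose ∅ ≠ Cl₊(A+B) ≠ Y. Then Inf(Inf A + Inf B) = Inf(A + B). -/

import Mathlib

open Set Pointwise Filter Topology

variable {Y : Type*} [AddCommGroup Y] [Module ℝ Y] [TopologicalSpace Y]
  [IsTopologicalAddGroup Y] [ContinuousSMul ℝ Y]

/-- Upper closure of a set with respect to the cone `C`. -/
def upClo (C A : Set Y) : Set Y := closure (A + C)

/-- Weakly minimal elements of `A` with respect to the cone `C`. -/
def wMinSet (C A : Set Y) : Set Y := {y ∈ A | ({y} - interior C) ∩ A = ∅}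

/-- Infimal set of `A` with respect to the cone `C`. -/
def infSet (C A : Set Y) : Set Y := wMinSet C (upClo C A)

section Aux

variable {C A B : Set Y}

lemma closure_add_closure (s t : Set Y) : closure s + closure t ⊆ closure (s + t) := by
  rintro x ⟨a, ha, b, hb, rfl⟩
  exact map_mem_closure₂ continuous_add ha hb fun p hp q hq => ⟨p, hp, q, hq, rfl⟩

lemma cone_add_self (hC : Convex ℝ C) (hCone : ∀ r : ℝ, 0 < r → r • C ⊆ C) :
    C + C ⊆ C := by
  rintro x ⟨a, ha, b, hb, rfl⟩
  have h : (2:ℝ) • ((1/2:ℝ) • a + (1/2:ℝ) • b) ∈ C :=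
    hCone 2 (by norm_num)
      (smul_mem_smul_set (hC ha hb (by norm_num) (by norm_num) (by norm_num)))
  have heq : (2:ℝ) • ((1/2:ℝ) • a + (1/2:ℝ) • b) = a + b := by
    rw [smul_add, smul_smul, smul_smul]; norm_num
  rwa [heq] at h

/-- membership characterization of `wMinSet`. -/
lemma mem_wMinSet {F : Set Y} {y : Y} :
    y ∈ wMinSet C F ↔ y ∈ F ∧ y ∉ F + interior C := by
  constructor
  · rintro ⟨hyF, hsep⟩
    refine ⟨hyF, ?_⟩
    rintro ⟨f, hf, e, he, rfl⟩
    have hmem : f ∈ ({f + e} - interior C) ∩ F :=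
      ⟨⟨f + e, rfl, e, he, by simp⟩, hf⟩
    rw [hsep] at hmem; exact hmem
  · rintro ⟨hyF, hny⟩
    refine ⟨hyF, ?_⟩
    rw [Set.eq_empty_iff_forall_notMem]
    rintro z ⟨⟨w, hw, e, he, rfl⟩, hzF⟩
    rw [Set.mem_singleton_iff] at hw; subst hw
    exact hny ⟨w - e, hzF, e, he, by simp⟩

lemma upClo_add_cone (hC : Convex ℝ C) (hCone : ∀ r : ℝ, 0 < r → r • C ⊆ C) (A : Set Y) :
    upClo C A + C ⊆ upClo C A := by
  have h1 : upClo C A + C ⊆ closure (A + C) + closure C :=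
    Set.add_subset_add_left subset_closure
  refine h1.trans ((closure_add_closure _ _).trans ?_)
  rw [upClo]
  apply closure_mono
  rw [add_assoc]
  exact Set.add_subset_add_left (cone_add_self hC hCone)

/-- Main lemma: the infimal set generates the same upper closure. -/
lemma upClo_infSet (hC : Convex ℝ C) (hCone : ∀ r : ℝ, 0 < r → r • C ⊆ C)
    (hInt : (interior C).Nonempty)
    (hA2 : upClo C A ≠ univ) :
    upClo C (infSet C A) = upClo C A := by
  obtain ⟨d, hd⟩ := hInt
  have hdC : d ∈ C := interior_subset hd
  set F := upClo C A with hF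
  have hFclosed : IsClosed F := isClosed_closure
  have hFC : F + C ⊆ F := upClo_add_cone hC hCone A
  apply Subset.antisymm
  · rw [upClo]
    have hsub : infSet C A + C ⊆ F + C := Set.add_subset_add_right (fun y hy => hy.1)
    exact (closure_mono (hsub.trans hFC)).trans (by rw [hFclosed.closure_eq])
  · intro y hy
    set T : Set ℝ := {t : ℝ | y - t • d ∈ F} with hT
    have h0T : (0:ℝ) ∈ T := by simp [hT, hy]
    have hTclosed : IsClosed T :=
      hFclosed.preimage (continuous_const.sub (continuous_id.smul continuous_const))
    have hTbdd : BddAbove T := by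
      by_contra hbdd
      apply hA2
      rw [eq_univ_iff_forall]
      intro z
      have htend : Filter.Tendsto (fun t : ℝ => d + t⁻¹ • (z - y)) Filter.atTop (𝓝 d) := by
        have h1 : Filter.Tendsto (fun t : ℝ => t⁻¹ • (z - y)) Filter.atTop (𝓝 (0:Y)) := by
          have h2 := (tendsto_inv_atTop_zero (𝕜 := ℝ)).smul_const (z - y)
          rwa [zero_smul] at h2
        have h3 := (tendsto_const_nhds (x := d) (f := Filter.atTop (α := ℝ))).add h1
        rwa [add_zero] at h3
      have hev : ∀ᶠ t : ℝ in Filter.atTop, d + t⁻¹ • (z - y) ∈ interior C :=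
        htend.eventually_mem (isOpen_interior.mem_nhds hd)
      obtain ⟨M, hM⟩ := Filter.eventually_atTop.mp hev
      rw [not_bddAbove_iff] at hbdd
      obtain ⟨t, htT, htM⟩ := hbdd (max M 0)
      have ht0 : 0 < t := lt_of_le_of_lt (le_max_right M 0) htM
      have htMle : M ≤ t := le_of_lt (lt_of_le_of_lt (le_max_left M 0) htM)
      have hmem : d + t⁻¹ • (z - y) ∈ interior C := hM t htMle
      have hsm : t • (d + t⁻¹ • (z - y)) ∈ C := hCone t ht0
        (smul_mem_smul_set (interior_subset hmem))
      have heq : (y - t • d) + t • (d + t⁻¹ • (z - y)) = z := by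
        rw [smul_add, smul_smul, mul_inv_cancel₀ (ne_of_gt ht0), one_smul]; abel
      exact heq ▸ hFC ⟨y - t • d, htT, _, hsm, rfl⟩
    set t₀ : ℝ := sSup T with ht₀
    have ht₀T : t₀ ∈ T := hTclosed.csSup_mem ⟨0, h0T⟩ hTbdd
    have ht₀nn : 0 ≤ t₀ := le_csSup hTbdd h0T
    set w : Y := y - t₀ • d with hw
    have hwF : w ∈ F := ht₀T
    have hwMin : w ∈ wMinSet C F := by
      rw [mem_wMinSet]
      refine ⟨hwF, ?_⟩
      rintro ⟨f, hf, e, he, hfe⟩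
      have hcont : Continuous fun ε : ℝ => e - ε • d :=
        continuous_const.sub (continuous_id.smul continuous_const)
      have hnhds : (fun ε : ℝ => e - ε • d) ⁻¹' interior C ∈ 𝓝 (0:ℝ) := by
        apply hcont.continuousAt.preimage_mem_nhds
        rw [show e - (0:ℝ) • d = e by simp]
        exact isOpen_interior.mem_nhds he
      obtain ⟨δ, hδ, hsubδ⟩ := Metric.mem_nhds_iff.mp hnhds
      have hεpos : (0:ℝ) < δ / 2 := by positivity
      have hεmem : e - (δ / 2) • d ∈ interior C := hsubδ (by
        simp only [Metric.mem_ball, Real.dist_eq, sub_zero, mem_preimage]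
        rw [abs_of_pos hεpos]; linarith)
      have hin : t₀ + δ / 2 ∈ T := by
        show y - (t₀ + δ / 2) • d ∈ F
        have heq2 : y - (t₀ + δ / 2) • d = f + (e - (δ / 2) • d) := by
          have hw' : f + e = y - t₀ • d := hfe
          rw [add_smul, ← sub_sub, ← hw']; abel
        rw [heq2]
        exact hFC ⟨f, hf, _, interior_subset hεmem, rfl⟩
      have hle : t₀ + δ / 2 ≤ t₀ := le_csSup hTbdd hin
      linarith
    have htendw : Filter.Tendsto (fun ε : ℝ => w + (t₀ + ε) • d) (𝓝[>] 0) (𝓝 y) := by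
      have hcw : Continuous fun ε : ℝ => w + (t₀ + ε) • d :=
        continuous_const.add ((continuous_const.add continuous_id).smul continuous_const)
      have h4 := hcw.continuousAt (x := (0:ℝ))
      have h0 : w + (t₀ + (0:ℝ)) • d = y := by rw [add_zero, hw]; abel
      rw [ContinuousAt, h0] at h4
      exact h4.mono_left nhdsWithin_le_nhds
    refine mem_closure_of_tendsto htendw ?_
    filter_upwards [self_mem_nhdsWithin] with ε hε
    have hpos : 0 < t₀ + ε := add_pos_of_nonneg_of_pos ht₀nn (mem_Ioi.mp hε)
    exact ⟨w, hwMin, (t₀ + ε) • d, hCone _ hpos (smul_mem_smul_set hdC), rfl⟩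

/-- If `A + C ⊆ closure (A' + C)` and `B + C ⊆ closure (B' + C)`, then
`closure (A + B + C) ⊆ closure (A' + B' + C)`. -/
lemma closure_sum_subset {A' B' : Set Y} (hC : Convex ℝ C)
    (hCone : ∀ r : ℝ, 0 < r → r • C ⊆ C) (hInt : (interior C).Nonempty)
    (h1 : A + C ⊆ closure (A' + C)) (h2 : B + C ⊆ closure (B' + C)) :
    closure (A + B + C) ⊆ closure (A' + B' + C) := by
  obtain ⟨d, hd⟩ := hInt
  have hdC : d ∈ C := interior_subset hd
  have hCC : C + C ⊆ C := cone_add_self hC hCone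
  have hclose : closure (A' + C) + closure (B' + C) ⊆ closure (A' + B' + C) := by
    refine (closure_add_closure _ _).trans (closure_mono ?_)
    rw [add_add_add_comm]
    exact Set.add_subset_add_left hCC
  apply closure_minimal ?_ isClosed_closure
  rintro x ⟨_, ⟨a, ha, b, hb, rfl⟩, c, hc, rfl⟩
  have htendw : Filter.Tendsto (fun ε : ℝ => (a + c) + (b + ε • d)) (𝓝[>] 0)
      (𝓝 (a + b + c)) := by
    have hcont : Continuous fun ε : ℝ => (a + c) + (b + ε • d) :=
      continuous_const.add (continuous_const.add (continuous_id.smul continuous_const))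
    have h4 := hcont.continuousAt (x := (0:ℝ))
    have h0 : (a + c) + (b + (0:ℝ) • d) = a + b + c := by rw [zero_smul]; abel
    rw [ContinuousAt, h0] at h4
    exact h4.mono_left nhdsWithin_le_nhds
  have hx : a + b + c ∈ closure (closure (A' + B' + C)) := by
    refine mem_closure_of_tendsto htendw ?_
    filter_upwards [self_mem_nhdsWithin] with ε hε
    apply hclose
    exact ⟨a + c, h1 ⟨a, ha, c, hc, rfl⟩, b + ε • d,
      h2 ⟨b, hb, ε • d, hCone ε (mem_Ioi.mp hε) (smul_mem_smul_set hdC), rfl⟩, by abel⟩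
  rwa [closure_closure] at hx

end Aux

theorem stmt_6 (C A B : Set Y) (hC : Convex ℝ C)
    (hCone : ∀ r : ℝ, 0 < r → r • C ⊆ C)
    (hInt : (interior C).Nonempty) (hIntNe : interior C ≠ univ)
    (hA1 : (upClo C A).Nonempty) (hA2 : upClo C A ≠ univ)
    (hB1 : (upClo C B).Nonempty) (hB2 : upClo C B ≠ univ)
    (hAB1 : (upClo C (A + B)).Nonempty) (hAB2 : upClo C (A + B) ≠ univ) :
    infSet C (infSet C A + infSet C B) = infSet C (A + B) := by
  have hIA : upClo C (infSet C A) = upClo C A := upClo_infSet hC hCone hInt hA2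
  have hIB : upClo C (infSet C B) = upClo C B := upClo_infSet hC hCone hInt hB2
  have hsub1 : infSet C A + C ⊆ closure (A + C) :=
    (Set.add_subset_add_right (fun y hy => hy.1)).trans (upClo_add_cone hC hCone A)
  have hsub2 : infSet C B + C ⊆ closure (B + C) :=
    (Set.add_subset_add_right (fun y hy => hy.1)).trans (upClo_add_cone hC hCone B)
  have hsub1' : A + C ⊆ closure (infSet C A + C) := by
    have heq : closure (infSet C A + C) = closure (A + C) := hIA
    rw [heq]; exact subset_closure
  have hsub2' : B + C ⊆ closure (infSet C B + C) := by
    have heq : closure (infSet C B + C) = closure (B + C) := hIB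
    rw [heq]; exact subset_closure
  have key : upClo C (infSet C A + infSet C B) = upClo C (A + B) :=
    Subset.antisymm (closure_sum_subset hC hCone hInt hsub1 hsub2)
      (closure_sum_subset hC hCone hInt hsub1' hsub2')
  show wMinSet C (upClo C (infSet C A + infSet C B)) = wMinSet C (upClo C (A + B))
  rw [key]
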